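/- For every GKAT expression e, the guarded language L(e) is deterministic: no string in L(e) is a proper prefix of another, and any two distinct strings in L(e) first differ at an atom. -/
import Mathlib


/-- A guarded string candidate: a list of atoms (sets of tests) and actions. -/
abbrev GList (A T : Type) := List (Set T ⊕ A)

/-- Guarded strings: nonempty alternating sequences starting and ending with an atom. -/
inductive IsGuarded {A T : Type} : GList A T → Prop
  | single (α : Set T) : IsGuarded [Sum.inl α]
  | cons (α : Set T) (p : A) {l : GList A T} : IsGuarded l →
      IsGuarded (Sum.inl α :: Sum.inr p :: l)

/-- Guarded composition of guarded languages: fuse matching boundary atoms. -/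
def gcomp {A T : Type} (L K : Set (GList A T)) : Set (GList A T) :=
  { z | ∃ (w : GList A T) (α : Set T) (x : GList A T),
      w ++ [Sum.inl α] ∈ L ∧ Sum.inl α :: x ∈ K ∧ z = w ++ Sum.inl α :: x }

/-- The language of all length-one guarded strings (all atoms). -/
def atomsLang {A T : Type} : Set (GList A T) := { w | ∃ α : Set T, w = [Sum.inl α] }

/-- Iterated guarded composition. -/
def gpow {A T : Type} (L : Set (GList A T)) : ℕ → Set (GList A T)
  | 0 => atomsLang
  | n + 1 => gcomp L (gpow L n)

/-- Guarded star. -/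
def gstar {A T : Type} (L : Set (GList A T)) : Set (GList A T) := ⋃ n, gpow L n

/-- Boolean (test) expressions over test variables T. -/
inductive BExp (T : Type) where
  | tru : BExp T
  | fls : BExp T
  | var (t : T) : BExp T
  | or (b c : BExp T) : BExp T
  | and (b c : BExp T) : BExp T
  | not (b : BExp T) : BExp T

/-- Satisfaction of a test by an atom (truth assignment). -/
def BExp.holds {T : Type} (α : Set T) : BExp T → Prop
  | .tru => True
  | .fls => False
  | .var t => t ∈ α
  | .or b c => BExp.holds α b ∨ BExp.holds α c
  | .and b c => BExp.holds α b ∧ BExp.holds α c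
  | .not b => ¬ BExp.holds α b

/-- The guarded language of a test. -/
def testLang {A T : Type} (b : BExp T) : Set (GList A T) :=
  { w | ∃ α : Set T, b.holds α ∧ w = [Sum.inl α] }

/-- KAT expressions over actions A and tests T. -/
inductive KExp (A T : Type) where
  | test (b : BExp T) : KExp A T
  | act (p : A) : KExp A T
  | plus (e f : KExp A T) : KExp A T
  | seq (e f : KExp A T) : KExp A T
  | star (e : KExp A T) : KExp A T

/-- Language semantics of KAT. -/
def lang {A T : Type} : KExp A T → Set (GList A T)
  | .test b => testLang b
  | .act p => { w | ∃ α β : Set T, w = [Sum.inl α, Sum.inr p, Sum.inl β] }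
  | .plus e f => lang e ∪ lang f
  | .seq e f => gcomp (lang e) (lang f)
  | .star e => gstar (lang e)

/-- Semantics of a test under a valuation τ on states S. -/
def bsem {T S : Type} (τ : T → Set S) : BExp T → Set S
  | .tru => Set.univ
  | .fls => ∅
  | .var t => τ t
  | .or b c => bsem τ b ∪ bsem τ c
  | .and b c => bsem τ b ∩ bsem τ c
  | .not b => (bsem τ b)ᶜ

/-- Relational semantics of KAT under an interpretation (S, τ, σ). -/
def rsem {A T S : Type} (τ : T → Set S) (σ : A → S → S → Prop) : KExp A T → S → S → Prop
  | .test b => fun s s' => s = s' ∧ s ∈ bsem τ b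
  | .act p => σ p
  | .plus e f => fun s s' => rsem τ σ e s s' ∨ rsem τ σ f s s'
  | .seq e f => fun s s' => ∃ s'', rsem τ σ e s s'' ∧ rsem τ σ f s'' s'
  | .star e => Relation.ReflTransGen (rsem τ σ e)

/-- A relation is a partial function. -/
def Functional {S : Type} (r : S → S → Prop) : Prop :=
  ∀ s s₁ s₂, r s s₁ → r s s₂ → s₁ = s₂

/-- A KAT expression is deterministic: it maps functional interpretations to functional relations. -/
def DetExp {A T : Type} (e : KExp A T) : Prop :=
  ∀ (S : Type) (τ : T → Set S) (σ : A → S → S → Prop),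
    (∀ p, Functional (σ p)) → Functional (rsem τ σ e)

/-- A guarded language is deterministic: no member is a proper prefix of another, and
any two distinct members first differ at an atom. -/
def DetLang {A T : Type} (L : Set (GList A T)) : Prop :=
  ∀ w ∈ L, ∀ x ∈ L, w ≠ x →
    ∃ (l w' x' : GList A T) (α β : Set T), α ≠ β ∧
      w = l ++ Sum.inl α :: w' ∧ x = l ++ Sum.inl β :: x'

/-- The atom of a state: the set of tests true at it. -/
def atomOf {T S : Type} (τ : T → Set S) (s : S) : Set T := { t | s ∈ τ t }

/-- Labeled paths in an interpretation, together with their induced guarded strings. -/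
inductive IsPath {A T S : Type} (τ : T → Set S) (σ : A → S → S → Prop) :
    S → GList A T → S → Prop
  | nil (s : S) : IsPath τ σ s [Sum.inl (atomOf τ s)] s
  | cons {s s' s'' : S} {p : A} {w : GList A T} :
      σ p s s' → IsPath τ σ s' w s'' →
      IsPath τ σ s (Sum.inl (atomOf τ s) :: Sum.inr p :: w) s''

/-- GKAT expressions. -/
inductive GExp (A T : Type) where
  | assert (b : BExp T) : GExp A T
  | act (p : A) : GExp A T
  | seq (e f : GExp A T) : GExp A T
  | ite (b : BExp T) (e f : GExp A T) : GExp A T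
  | whl (b : BExp T) (e : GExp A T) : GExp A T

/-- Language semantics of GKAT. -/
def glang {A T : Type} : GExp A T → Set (GList A T)
  | .assert b => testLang b
  | .act p => { w | ∃ α β : Set T, w = [Sum.inl α, Sum.inr p, Sum.inl β] }
  | .seq e f => gcomp (glang e) (glang f)
  | .ite b e f => gcomp (testLang b) (glang e) ∪ gcomp (testLang b.not) (glang f)
  | .whl b e => gcomp (gstar (gcomp (testLang b) (glang e))) (testLang b.not)

/-- Output of a deterministic KAT automaton on a state and atom. -/
inductive Out (A Q : Type) where
  | accept : Out A Q
  | reject : Out A Q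
  | step (p : A) (q : Q) : Out A Q

/-- Acceptance in a deterministic KAT automaton with transition function δ,
starting from dynamics γ. -/
inductive AccFrom {A T Q : Type} (δ : Q → Set T → Out A Q) :
    (Set T → Out A Q) → GList A T → Prop
  | accept {γ : Set T → Out A Q} {α : Set T} :
      γ α = Out.accept → AccFrom δ γ [Sum.inl α]
  | step {γ : Set T → Out A Q} {α : Set T} {p : A} {q : Q} {w : GList A T} :
      γ α = Out.step p q → AccFrom δ (δ q) w →
      AccFrom δ γ (Sum.inl α :: Sum.inr p :: w)

/-- Brzozowski derivative of a language with respect to a word. -/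
def dl {A T : Type} (L : Set (GList A T)) (u : GList A T) : Set (GList A T) :=
  { x | u ++ x ∈ L }

/-- An atom β over T₁ is 𝔱-consistent with an atom α over T₀. -/
def TConsistent {T₀ T₁ : Type} (𝔱 : T₀ → BExp T₁) (α : Set T₀) (β : Set T₁) : Prop :=
  ∀ t, t ∈ α ↔ (𝔱 t).holds β

/-- Atom-replacement relation induced by a test substitution 𝔱. -/
inductive TRel {A T₀ T₁ : Type} (𝔱 : T₀ → BExp T₁) : GList A T₀ → GList A T₁ → Prop
  | nil : TRel 𝔱 [] []
  | atom {α : Set T₀} {β : Set T₁} {w : GList A T₀} {x : GList A T₁} :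
      TConsistent 𝔱 α β → TRel 𝔱 w x → TRel 𝔱 (Sum.inl α :: w) (Sum.inl β :: x)
  | act {p : A} {w : GList A T₀} {x : GList A T₁} :
      TRel 𝔱 w x → TRel 𝔱 (Sum.inr p :: w) (Sum.inr p :: x)

/-- apply_𝔱 on guarded languages. -/
def applyT {A T₀ T₁ : Type} (𝔱 : T₀ → BExp T₁) (L : Set (GList A T₀)) : Set (GList A T₁) :=
  { x | ∃ w ∈ L, TRel 𝔱 w x }

/-- Action-replacement relation induced by an action substitution 𝔰: each action is
replaced by a guarded string of 𝔰(p), fused with the surrounding atoms. -/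
inductive SRel {A₀ A₁ T : Type} (𝔰 : A₀ → Set (GList A₁ T)) :
    GList A₀ T → GList A₁ T → Prop
  | single (α : Set T) : SRel 𝔰 [Sum.inl α] [Sum.inl α]
  | step {α β : Set T} {p : A₀} {u : GList A₁ T} {w : GList A₀ T} {x : GList A₁ T} :
      Sum.inl α :: u ++ [Sum.inl β] ∈ 𝔰 p →
      SRel 𝔰 (Sum.inl β :: w) (Sum.inl β :: x) →
      SRel 𝔰 (Sum.inl α :: Sum.inr p :: Sum.inl β :: w) (Sum.inl α :: u ++ Sum.inl β :: x)

/-- apply^𝔰 on guarded languages. -/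
def applyS {A₀ A₁ T : Type} (𝔰 : A₀ → Set (GList A₁ T)) (L : Set (GList A₀ T)) :
    Set (GList A₁ T) :=
  { x | ∃ w ∈ L, SRel 𝔰 w x }

/-- Builder for the guarded strings of the language L_k. -/
def buildLk {k : ℕ} : Fin k → Fin k → List (Fin k) → GList (Fin k) (Fin k)
  | cur, act, [] => [Sum.inl {cur}, Sum.inr act, Sum.inl {cur}]
  | cur, act, j :: rest => Sum.inl {cur} :: Sum.inr act :: buildLk j cur rest

/-- The language L_k of Definition 6.2. -/
def Lk (k : ℕ) (hk : 0 < k) : Set (GList (Fin k) (Fin k)) :=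
  { w | ∃ (i : Fin k) (rest : List (Fin k)),
      i ≠ ⟨0, hk⟩ ∧ List.Chain' (· ≠ ·) (i :: rest) ∧ w = buildLk i ⟨0, hk⟩ rest }

/-- k-density of a deterministic KAT automaton transition function. -/
def KDense {A T Q : Type} (δ : Q → Set T → Out A Q) (k : ℕ) : Prop :=
  ∃ (S : Fin k → Set Q) (α : Fin k → Set T) (pa : Q → Fin k → A),
    Function.Injective α ∧
    (∀ i, (S i).Nonempty) ∧
    (∀ i q, q ∈ S i → δ q (α i) = Out.accept) ∧
    (∀ i j q, i ≠ j → q ∈ S i → ∃ q' ∈ S j, δ q (α j) = Out.step (pa q j) q') ∧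
    (∀ i j m q q', q ∈ S i → q' ∈ S j → pa q m = pa q' m → i = j)

/-- The sequence of actions occurring in a guarded string. -/
def actsOf {A T : Type} (w : GList A T) : List A :=
  w.filterMap (fun x => match x with | .inl _ => none | .inr p => some p)

/-- The guarded language of a word over Σ: all guarded strings with that action sequence. -/
def wordLang {A T : Type} (ps : List A) : Set (GList A T) :=
  { w | IsGuarded w ∧ actsOf w = ps }

/-- Test expressions without test variables. -/
def BExp.varFree {T : Type} : BExp T → Prop
  | .tru => True
  | .fls => True
  | .var _ => False
  | .or b c => BExp.varFree b ∧ BExp.varFree c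
  | .and b c => BExp.varFree b ∧ BExp.varFree c
  | .not b => BExp.varFree b

/-- KA expressions: KAT expressions with no test variables. -/
def KExp.testFree {A T : Type} : KExp A T → Prop
  | .test b => b.varFree
  | .act _ => True
  | .plus e f => KExp.testFree e ∧ KExp.testFree f
  | .seq e f => KExp.testFree e ∧ KExp.testFree f
  | .star e => KExp.testFree e


section DetAux

variable {A T : Type}

lemma det_testLang {b : BExp T} : DetLang (testLang b : Set (GList A T)) := by
  rintro w ⟨α, hα, rfl⟩ x ⟨β, hβ, rfl⟩ hne
  refine ⟨[], [], [], α, β, ?_, rfl, rfl⟩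
  intro h; exact hne (by rw [h])

lemma suffix_concat {X : Type} {t v w : List X} {a : X} (ht : t ≠ [])
    (h : v ++ t = w ++ [a]) : ∃ w', t = w' ++ [a] := by
  cases hrev : t.reverse with
  | nil => exact absurd (List.reverse_eq_nil_iff.mp hrev) ht
  | cons c s =>
    have hr : t.reverse ++ v.reverse = a :: w.reverse := by
      rw [← List.reverse_append, h, List.reverse_append]; simp
    rw [hrev, List.cons_append] at hr
    injection hr with hc _
    refine ⟨s.reverse, ?_⟩
    rw [← t.reverse_reverse, hrev, hc]; simp

lemma extend_decomp {w l r x : GList A T} {α : Set T} {c : Set T ⊕ A}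
    (h : w ++ [Sum.inl α] = l ++ c :: r) :
    ∃ r', w ++ Sum.inl α :: x = l ++ c :: r' := by
  rcases r.eq_nil_or_concat with rfl | ⟨r₀, a, rfl⟩
  · obtain ⟨rfl, h2⟩ := List.append_inj' h rfl
    injection h2 with h2 _
    exact ⟨x, by rw [h2]⟩
  · have h' : w ++ [Sum.inl α] = (l ++ c :: r₀) ++ [a] := by rw [h]; simp
    obtain ⟨hw, h2⟩ := List.append_inj' h' rfl
    refine ⟨r₀ ++ Sum.inl α :: x, ?_⟩
    rw [hw]; simp

lemma det_gcomp {L K : Set (GList A T)} (hL : DetLang L) (hK : DetLang K) :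
    DetLang (gcomp L K) := by
  rintro z1 ⟨w1, α1, x1, hw1, hx1, rfl⟩ z2 ⟨w2, α2, x2, hw2, hx2, rfl⟩ hne
  by_cases h : w1 ++ [Sum.inl α1] = w2 ++ [Sum.inl α2]
  · obtain ⟨rfl, h2⟩ := List.append_inj' h rfl
    injection h2 with h2 _
    injection h2 with h2
    subst h2
    have hxne : (Sum.inl α1 :: x1 : GList A T) ≠ Sum.inl α1 :: x2 := by
      intro hh; exact hne (by rw [hh])
    obtain ⟨l, w', x', γ, δ, hγδ, h1, h2⟩ := hK _ hx1 _ hx2 hxne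
    exact ⟨w1 ++ l, w', x', γ, δ, hγδ, by rw [h1]; simp, by rw [h2]; simp⟩
  · obtain ⟨l, r1, r2, γ, δ, hγδ, h1, h2⟩ := hL _ hw1 _ hw2 h
    obtain ⟨r1', e1⟩ := extend_decomp (x := x1) h1
    obtain ⟨r2', e2⟩ := extend_decomp (x := x2) h2
    exact ⟨l, r1', r2', γ, δ, hγδ, e1, e2⟩

lemma mem_gcomp_test {b : BExp T} {L : Set (GList A T)} {z : GList A T}
    (h : z ∈ gcomp (testLang b) L) :
    ∃ α y, b.holds α ∧ z = Sum.inl α :: y := by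
  obtain ⟨w, α, x, hw, hx, rfl⟩ := h
  obtain ⟨β, hβ, he⟩ := hw
  cases w with
  | nil =>
    rw [List.nil_append] at he
    injection he with h1 _
    injection h1 with h1
    subst h1
    exact ⟨_, x, hβ, by simp⟩
  | cons c w' =>
    have := congrArg List.length he
    simp at this

lemma head_gpow_succ {b : BExp T} {E : Set (GList A T)} {z : GList A T} {n : ℕ}
    (h : z ∈ gpow (gcomp (testLang b) E) (n + 1)) :
    ∃ β y, b.holds β ∧ z = Sum.inl β :: y := by
  rw [gpow] at h
  obtain ⟨v, γ, x, hv, _, rfl⟩ := h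
  obtain ⟨β, y, hβ, he⟩ := mem_gcomp_test hv
  cases v with
  | nil =>
    rw [List.nil_append] at he
    injection he with h1 _
    injection h1 with h1
    subst h1
    exact ⟨_, x, hβ, by simp⟩
  | cons c v' =>
    rw [List.cons_append] at he
    injection he with h1 _
    subst h1
    exact ⟨β, v' ++ Sum.inl γ :: x, hβ, by simp⟩

lemma while_aux {b : BExp T} {E : Set (GList A T)} (hE : DetLang E) :
    ∀ n1 n2 (z1 z2 w1 w2 : GList A T) (α1 α2 : Set T),
      ¬ b.holds α1 → ¬ b.holds α2 →
      z1 = w1 ++ [Sum.inl α1] → z2 = w2 ++ [Sum.inl α2] →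
      z1 ∈ gpow (gcomp (testLang b) E) n1 → z2 ∈ gpow (gcomp (testLang b) E) n2 →
      z1 ≠ z2 →
      ∃ (l w' x' : GList A T) (γ δ : Set T), γ ≠ δ ∧
        z1 = l ++ Sum.inl γ :: w' ∧ z2 = l ++ Sum.inl δ :: x' := by
  have hM : DetLang (gcomp (testLang b) E) := det_gcomp det_testLang hE
  intro n1
  induction n1 with
  | zero =>
    intro n2 z1 z2 w1 w2 α1 α2 hα1 hα2 hz1 hz2 h1 h2 hne
    obtain ⟨β1, hb1⟩ := h1
    -- z1 = [Sum.inl β1]; deduce β1 = α1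
    have hw1 : w1 = [] ∧ α1 = β1 := by
      rw [hb1] at hz1
      cases w1 with
      | nil =>
        rw [List.nil_append] at hz1
        injection hz1 with ha _
        injection ha with ha
        exact ⟨rfl, ha.symm⟩
      | cons c w' =>
        have := congrArg List.length hz1
        simp at this
    obtain ⟨rfl, rfl⟩ := hw1
    cases n2 with
    | zero =>
      obtain ⟨β2, hb2⟩ := h2
      have hβ2 : α2 = β2 := by
        rw [hb2] at hz2
        cases w2 with
        | nil =>
          rw [List.nil_append] at hz2
          injection hz2 with ha _
          injection ha with ha
          exact ha.symm
        | cons c w' =>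
          have := congrArg List.length hz2
          simp at this
      refine ⟨[], [], [], α1, β2, ?_, by rw [hb1]; rfl, by rw [hb2]; rfl⟩
      intro h; apply hne; rw [hb1, hb2, h]
    | succ m =>
      obtain ⟨β, y, hβ, hzz⟩ := head_gpow_succ h2
      refine ⟨[], [], y, α1, β, ?_, by rw [hb1]; rfl, by rw [hzz]; rfl⟩
      intro h; exact hα1 (h ▸ hβ)
  | succ n ih =>
    intro n2 z1 z2 w1 w2 α1 α2 hα1 hα2 hz1 hz2 h1 h2 hne
    cases n2 with
    | zero =>
      obtain ⟨β2, hb2⟩ := h2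
      have hw2 : α2 = β2 := by
        rw [hb2] at hz2
        cases w2 with
        | nil =>
          rw [List.nil_append] at hz2
          injection hz2 with ha _
          injection ha with ha
          exact ha.symm
        | cons c w' =>
          have := congrArg List.length hz2
          simp at this
      subst hw2
      obtain ⟨β, y, hβ, hzz⟩ := head_gpow_succ h1
      refine ⟨[], y, [], β, α2, ?_, by rw [hzz]; rfl, by rw [hb2]; rfl⟩
      intro h; exact hα2 (h ▸ hβ)
    | succ m =>
      rw [gpow] at h1 h2
      obtain ⟨v1, γ1, x1, hu1, ht1, hzz1⟩ := h1
      obtain ⟨v2, γ2, x2, hu2, ht2, hzz2⟩ := h2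
      by_cases h : v1 ++ [Sum.inl γ1] = v2 ++ [Sum.inl γ2]
      · obtain ⟨rfl, hh⟩ := List.append_inj' h rfl
        injection hh with hh _
        injection hh with hh
        subst hh
        -- tails are distinct
        have htne : (Sum.inl γ1 :: x1 : GList A T) ≠ Sum.inl γ1 :: x2 := by
          intro hh; apply hne; rw [hzz1, hzz2, hh]
        -- tails end with the final atoms
        have hs1 : ∃ w1', (Sum.inl γ1 :: x1 : GList A T) = w1' ++ [Sum.inl α1] :=
          suffix_concat (by simp) (by rw [← hzz1, hz1])
        have hs2 : ∃ w2', (Sum.inl γ1 :: x2 : GList A T) = w2' ++ [Sum.inl α2] :=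
          suffix_concat (by simp) (by rw [← hzz2, hz2])
        obtain ⟨w1', hw1'⟩ := hs1
        obtain ⟨w2', hw2'⟩ := hs2
        obtain ⟨l, w', x', γ, δ, hγδ, e1, e2⟩ :=
          ih m _ _ w1' w2' α1 α2 hα1 hα2 hw1' hw2' ht1 ht2 htne
        refine ⟨v1 ++ l, w', x', γ, δ, hγδ, ?_, ?_⟩
        · rw [hzz1, e1]; simp
        · rw [hzz2, e2]; simp
      · obtain ⟨l, r1, r2, γ, δ, hγδ, e1, e2⟩ := hM _ hu1 _ hu2 h
        obtain ⟨r1', f1⟩ := extend_decomp (x := x1) e1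
        obtain ⟨r2', f2⟩ := extend_decomp (x := x2) e2
        exact ⟨l, r1', r2', γ, δ, hγδ, by rw [hzz1, f1], by rw [hzz2, f2]⟩

lemma mem_while {b : BExp T} {M : Set (GList A T)} {z : GList A T}
    (h : z ∈ gcomp (gstar M) (testLang b.not)) :
    ∃ (n : ℕ) (w : GList A T) (α : Set T),
      ¬ b.holds α ∧ z = w ++ [Sum.inl α] ∧ z ∈ gpow M n := by
  obtain ⟨w, α, x, hw, hx, rfl⟩ := h
  obtain ⟨β, hβ, he⟩ := hx
  injection he with h1 h2
  injection h1 with h1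
  subst h1; subst h2
  rw [gstar, Set.mem_iUnion] at hw
  obtain ⟨n, hn⟩ := hw
  exact ⟨n, w, _, hβ, rfl, hn⟩

end DetAux

/-- every GKAT expression denotes a deterministic guarded language. -/
theorem glang_deterministic {A T : Type} (e : GExp A T) : DetLang (glang e) := by
  induction e with
  | assert b => exact det_testLang
  | act p =>
    rintro w ⟨α, β, rfl⟩ x ⟨α', β', rfl⟩ hne
    by_cases hα : α = α'
    · subst hα
      refine ⟨[Sum.inl α, Sum.inr p], [], [], β, β', ?_, rfl, rfl⟩
      intro h; apply hne; rw [h]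
    · exact ⟨[], [Sum.inr p, Sum.inl β], [Sum.inr p, Sum.inl β'], α, α', hα, rfl, rfl⟩
  | seq e f ihe ihf => exact det_gcomp ihe ihf
  | ite b e f ihe ihf =>
    rintro z1 (h1 | h1) z2 (h2 | h2) hne
    · exact det_gcomp det_testLang ihe _ h1 _ h2 hne
    · obtain ⟨α, y1, hα, rfl⟩ := mem_gcomp_test h1
      obtain ⟨β, y2, hβ, rfl⟩ := mem_gcomp_test h2
      refine ⟨[], y1, y2, α, β, ?_, rfl, rfl⟩
      intro h; exact hβ (h ▸ hα)
    · obtain ⟨α, y1, hα, rfl⟩ := mem_gcomp_test h1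
      obtain ⟨β, y2, hβ, rfl⟩ := mem_gcomp_test h2
      refine ⟨[], y1, y2, α, β, ?_, rfl, rfl⟩
      intro h; exact hα (h.symm ▸ hβ)
    · exact det_gcomp det_testLang ihf _ h1 _ h2 hne
  | whl b e ihe =>
    rintro z1 h1 z2 h2 hne
    obtain ⟨n1, w1, α1, hα1, hz1, hm1⟩ := mem_while h1
    obtain ⟨n2, w2, α2, hα2, hz2, hm2⟩ := mem_while h2
    exact while_aux ihe n1 n2 z1 z2 w1 w2 α1 α2 hα1 hα2 hz1 hz2 hm1 hm2 hne
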